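/- Let L be a function from BCCSP processes to a set Λ of local observations and let N be the equivalence relation defined by p N q ⇔ L(p) = L(q). Then for all BCCSP processes p and q: p ⊑_NS q if and only if BGO_L(p) ⊆ BGO_L(q). -/

import Mathlib

/-- BCCSP processes over a set `Act` of actions. -/
inductive Proc (Act : Type) : Type where
  | nil : Proc Act
  | pre : Act → Proc Act → Proc Act
  | choice : Proc Act → Proc Act → Proc Act

/-- The transition relation of BCCSP. -/
inductive Proc.Step {Act : Type} : Proc Act → Act → Proc Act → Prop where
  | pre (a : Act) (p : Proc Act) : Proc.Step (Proc.pre a p) a p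
  | left {p p' : Proc Act} {a : Act} (q : Proc Act) :
      Proc.Step p a p' → Proc.Step (Proc.choice p q) a p'
  | right (p : Proc Act) {q q' : Proc Act} {a : Act} :
      Proc.Step q a q' → Proc.Step (Proc.choice p q) a q'

/-- The initial offer of a process. -/
def Proc.initials {Act : Type} (p : Proc Act) : Set Act :=
  {a | ∃ p', Proc.Step p a p'}

/-- `S` is an `N`-constrained simulation. -/
def IsNSim {Act : Type} (N : Proc Act → Proc Act → Prop)
    (S : Proc Act → Proc Act → Prop) : Prop :=
  ∀ p q, S p q → N p q ∧
    ∀ a p', Proc.Step p a p' → ∃ q', Proc.Step q a q' ∧ S p' q'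

/-- `p ⊑_NS q` : `p` is `N`-simulated by `q`. -/
def NSimLe {Act : Type} (N : Proc Act → Proc Act → Prop) (p q : Proc Act) : Prop :=
  ∃ S, IsNSim N S ∧ S p q

/-- Branching general observations: finite trees with nodes labeled in `Λ`
and arcs labeled by actions in `Act`. -/
inductive Obs (Act Λ : Type) : Type where
  | node : Λ → List (Act × Obs Act Λ) → Obs Act Λ

/-- Membership `b ∈ BGO_L(p)`:
`BGO_L(p) = {⟨L(p), S⟩ | S ⊆ {(a, b) | p →a p', b ∈ BGO_L(p')}}`. -/
def InBGO {Act Λ : Type} (L : Proc Act → Λ) : Obs Act Λ → Proc Act → Prop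
  | Obs.node l S, p =>
      l = L p ∧ ∀ a b, (a, b) ∈ S → ∃ p', Proc.Step p a p' ∧ InBGO L b p'
termination_by b _ => sizeOf b
decreasing_by
  have h1 : sizeOf (a, b) < sizeOf S := List.sizeOf_lt_of_mem (by assumption)
  simp at h1 ⊢
  omega


def derivs {Act : Type} : Proc Act → List (Act × Proc Act)
  | .nil => []
  | .pre a p => [(a, p)]
  | .choice p q => derivs p ++ derivs q

lemma step_iff_mem_derivs {Act : Type} {p : Proc Act} {a : Act} {p' : Proc Act} :
    Proc.Step p a p' ↔ (a, p') ∈ derivs p := by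
  constructor
  · intro h; induction h <;> simp [derivs, *]
  · intro h
    induction p with
    | nil => simp [derivs] at h
    | pre b r => simp [derivs] at h; obtain ⟨rfl, rfl⟩ := h; exact .pre _ _
    | choice r s ihr ihs =>
      simp only [derivs, List.mem_append] at h
      rcases h with h | h
      · exact .left _ (ihr h)
      · exact .right _ (ihs h)

lemma InBGO_join {Act Λ : Type} {L : Proc Act → Λ} {l : Λ}
    {S1 S2 : List (Act × Obs Act Λ)} {p : Proc Act}
    (h1 : InBGO L (.node l S1) p) (h2 : InBGO L (.node l S2) p) :
    InBGO L (.node l (S1 ++ S2)) p := by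
  simp only [InBGO] at *
  obtain ⟨ha, h1'⟩ := h1
  obtain ⟨-, h2'⟩ := h2
  refine ⟨ha, fun a b hab => ?_⟩
  rcases List.mem_append.mp hab with h | h
  exacts [h1' a b h, h2' a b h]

lemma InBGO_mono {Act Λ : Type} {L : Proc Act → Λ} {l : Λ}
    {S1 S2 : List (Act × Obs Act Λ)} {p : Proc Act}
    (hsub : ∀ x ∈ S1, x ∈ S2) (h : InBGO L (.node l S2) p) :
    InBGO L (.node l S1) p := by
  simp only [InBGO] at *
  exact ⟨h.1, fun a b hab => h.2 a b (hsub _ hab)⟩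

lemma forward_aux {Act Λ : Type} (L : Proc Act → Λ) (N : Proc Act → Proc Act → Prop)
    (S : Proc Act → Proc Act → Prop) (hS : IsNSim N S)
    (hN : ∀ p q, N p q ↔ L p = L q) :
    ∀ n (b : Obs Act Λ), sizeOf b < n → ∀ p q, S p q → InBGO L b p → InBGO L b q := by
  intro n
  induction n with
  | zero => intro b hb; omega
  | succ n ih =>
    rintro ⟨l, Sl⟩ hsize p q hpq hp
    simp only [InBGO] at hp ⊢
    obtain ⟨hl, hch⟩ := hp
    obtain ⟨hNpq, hsim⟩ := hS p q hpq
    refine ⟨hl.trans ((hN p q).mp hNpq), fun a b hab => ?_⟩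
    obtain ⟨p', hstep, hb⟩ := hch a b hab
    obtain ⟨q', hqstep, hS'⟩ := hsim a p' hstep
    have h1 : sizeOf (a, b) < sizeOf Sl := List.sizeOf_lt_of_mem hab
    have : sizeOf b < n := by simp at h1 hsize; omega
    exact ⟨q', hqstep, ih b this p' q' hS' hb⟩

lemma exists_bad {Act Λ : Type} (L : Proc Act → Λ) (p' : Proc Act) (a : Act)
    (l : List (Act × Proc Act))
    (h : ∀ x ∈ l, x.1 = a → ∃ b, InBGO L b p' ∧ ¬ InBGO L b x.2) :
    ∃ S, InBGO L (Obs.node (L p') S) p' ∧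
      ∀ x ∈ l, x.1 = a → ¬ InBGO L (Obs.node (L p') S) x.2 := by
  induction l with
  | nil => exact ⟨[], by simp [InBGO], by simp⟩
  | cons x t ih =>
    obtain ⟨S, hS, hbad⟩ := ih (fun y hy hya => h y (List.mem_cons_of_mem _ hy) hya)
    by_cases hx : x.1 = a
    · obtain ⟨b, hb, hnb⟩ := h x List.mem_cons_self hx
      obtain ⟨l', S'⟩ := b
      have hl' : l' = L p' := by simp only [InBGO] at hb; exact hb.1
      subst hl'
      refine ⟨S' ++ S, InBGO_join hb hS, ?_⟩
      intro y hy hya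
      rcases List.mem_cons.mp hy with rfl | hy
      · exact fun hc => hnb (InBGO_mono (fun z hz => List.mem_append.mpr (Or.inl hz)) hc)
      · exact fun hc => hbad y hy hya (InBGO_mono (fun z hz => List.mem_append.mpr (Or.inr hz)) hc)
    · refine ⟨S, hS, ?_⟩
      intro y hy hya
      rcases List.mem_cons.mp hy with rfl | hy
      · exact absurd hya hx
      · exact hbad y hy hya

/-- with `N` the kernel of the local observation function `L`,
`p ⊑_NS q` iff `BGO_L(p) ⊆ BGO_L(q)`. -/
theorem stmt0 {Act Λ : Type} (L : Proc Act → Λ) (N : Proc Act → Proc Act → Prop)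
    (hN : ∀ p q, N p q ↔ L p = L q) (p q : Proc Act) :
    NSimLe N p q ↔ {b | InBGO L b p} ⊆ {b | InBGO L b q} := by
  constructor
  · rintro ⟨S, hS, hpq⟩ b hb
    exact forward_aux L N S hS hN (sizeOf b + 1) b (by omega) p q hpq hb
  · intro h
    refine ⟨fun p q => ∀ b, InBGO L b p → InBGO L b q, ?_, fun b hb => h hb⟩
    intro p q hpq
    constructor
    · have := hpq (Obs.node (L p) []) (by simp [InBGO])
      simp only [InBGO] at this
      exact (hN p q).mpr this.1
    · intro a p' hstep
      by_contra hno
      have hbad : ∀ x ∈ derivs q, x.1 = a → ∃ b, InBGO L b p' ∧ ¬ InBGO L b x.2 := by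
        rintro ⟨a', q'⟩ hmem rfl
        have hq : Proc.Step q a' q' := step_iff_mem_derivs.mpr hmem
        by_contra hc
        push_neg at hc
        exact hno ⟨q', hq, hc⟩
      obtain ⟨S, hSin, hSbad⟩ := exists_bad L p' a (derivs q) hbad
      have hb0 : InBGO L (Obs.node (L p) [(a, Obs.node (L p') S)]) p := by
        simp only [InBGO]
        constructor
        · trivial
        · intro a' b hab
          simp only [List.mem_singleton, Prod.mk.injEq] at hab
          obtain ⟨rfl, rfl⟩ := hab
          exact ⟨p', hstep, hSin⟩
      have hq0 := hpq _ hb0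
      simp only [InBGO] at hq0
      obtain ⟨q', hqstep, hq'⟩ := hq0.2 a (Obs.node (L p') S) (by simp)
      exact hSbad (a, q') (step_iff_mem_derivs.mp hqstep) rfl hq'
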